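/- The skew Schur polynomial s_{P/Q}(x_1,…,x_n) is a symmetric polynomial: for every permutation σ of {1,…,n}, replacing each variable x_i by x_{σ(i)} leaves s_{P/Q} unchanged. -/

import Mathlib

open Finset
open scoped Classical

def ShapeHyps (m n : ℕ) (P Q : ℕ → ℤ) : Prop :=
  2 ≤ n ∧ n ≤ m ∧
  (∀ r, 1 ≤ r → r < m → P (r + 1) ≤ P r) ∧ 0 ≤ P m ∧
  (∀ r, 1 ≤ r → r < m → Q (r + 1) ≤ Q r) ∧ 0 ≤ Q m ∧
  (∀ r, 1 ≤ r → r ≤ m → Q r ≤ P r) ∧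
  (∀ c : ℤ, ((Finset.Icc 1 m).filter (fun r => Q r < c ∧ c ≤ P r)).card ≤ n)

/-- The finite set of cells of the skew shape `P/Q`: pairs `(r,c)` with
`1 ≤ r ≤ m` and `Q_r < c ≤ P_r`. -/
noncomputable def cells (m : ℕ) (P Q : ℕ → ℤ) : Finset (ℕ × ℤ) :=
  (Finset.Icc 1 m ×ˢ Finset.Icc 1 (P 1)).filter fun x => Q x.1 < x.2 ∧ x.2 ≤ P x.1

/-- A semistandard `n`-tableau of skew shape `P/Q`: entries in `{1,…,n}`, rows
weakly increasing, columns strictly increasing; values outside the cells of the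
shape are normalized to `0`. -/
def IsSSYT (m n : ℕ) (P Q : ℕ → ℤ) (T : ℕ × ℤ → ℕ) : Prop :=
  (∀ x ∈ cells m P Q, 1 ≤ T x ∧ T x ≤ n) ∧
  (∀ (r : ℕ) (c : ℤ), (r, c) ∈ cells m P Q → (r, c + 1) ∈ cells m P Q →
    T (r, c) ≤ T (r, c + 1)) ∧
  (∀ (r : ℕ) (c : ℤ), (r, c) ∈ cells m P Q → (r + 1, c) ∈ cells m P Q →
    T (r, c) < T (r + 1, c)) ∧
  (∀ x, x ∉ cells m P Q → T x = 0)

/-- `#_i(T)`: the number of cells of `T` with entry `i`. -/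
noncomputable def entryCount (m : ℕ) (P Q : ℕ → ℤ) (T : ℕ × ℤ → ℕ) (i : ℕ) : ℕ :=
  ((cells m P Q).filter fun x => T x = i).card

/-- The skew Schur polynomial `s_{P/Q}(x_1,…,x_n)`, with the variable `x_{i+1}`
encoded as `MvPolynomial.X (i : Fin n)`. -/
noncomputable def skewSchur (m n : ℕ) (P Q : ℕ → ℤ) : MvPolynomial (Fin n) ℤ :=
  ∑ᶠ T ∈ {T : ℕ × ℤ → ℕ | IsSSYT m n P Q T},
    ∏ i : Fin n, MvPolynomial.X i ^ entryCount m P Q T ((i : ℕ) + 1)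

namespace SkewBK

variable {m n : ℕ} {P Q : ℕ → ℤ} {T : ℕ × ℤ → ℕ} {a : ℕ}

lemma P_anti (h : ShapeHyps m n P Q) {r r' : ℕ} (h1 : 1 ≤ r) (h2 : r ≤ r') (h3 : r' ≤ m) :
    P r' ≤ P r := by
  induction r', h2 using Nat.le_induction with
  | base => exact le_rfl
  | succ r' hrr' ih =>
      exact le_trans (h.2.2.1 r' (h1.trans hrr') (by omega)) (ih (by omega))

lemma Q_anti (h : ShapeHyps m n P Q) {r r' : ℕ} (h1 : 1 ≤ r) (h2 : r ≤ r') (h3 : r' ≤ m) :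
    Q r' ≤ Q r := by
  induction r', h2 using Nat.le_induction with
  | base => exact le_rfl
  | succ r' hrr' ih =>
      exact le_trans (h.2.2.2.2.1 r' (h1.trans hrr') (by omega)) (ih (by omega))

lemma mem_cells (h : ShapeHyps m n P Q) {x : ℕ × ℤ} :
    x ∈ cells m P Q ↔ 1 ≤ x.1 ∧ x.1 ≤ m ∧ Q x.1 < x.2 ∧ x.2 ≤ P x.1 := by
  obtain ⟨r, c⟩ := x
  simp only [cells, mem_filter, mem_product, mem_Icc]
  constructor
  · rintro ⟨⟨⟨h1, h2⟩, -⟩, h4, h5⟩; exact ⟨h1, h2, h4, h5⟩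
  · rintro ⟨h1, h2, h4, h5⟩
    have hQ0 : (0 : ℤ) ≤ Q r := le_trans h.2.2.2.2.2.1 (Q_anti h h1 h2 le_rfl)
    have hP1 : P r ≤ P 1 := P_anti h le_rfl h1 h2
    exact ⟨⟨⟨h1, h2⟩, by omega, by omega⟩, h4, h5⟩

lemma mem_cells' (h : ShapeHyps m n P Q) {r : ℕ} {c : ℤ} :
    (r, c) ∈ cells m P Q ↔ 1 ≤ r ∧ r ≤ m ∧ Q r < c ∧ c ≤ P r := mem_cells h

lemma cell_between (h : ShapeHyps m n P Q) {r : ℕ} {c c' c'' : ℤ}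
    (h1 : (r, c) ∈ cells m P Q) (h2 : (r, c') ∈ cells m P Q) (hl : c ≤ c'') (hr : c'' ≤ c') :
    (r, c'') ∈ cells m P Q := by
  rw [mem_cells' h] at *
  exact ⟨h1.1, h1.2.1, by omega, by omega⟩

lemma cell_below (h : ShapeHyps m n P Q) {r : ℕ} {c c' : ℤ}
    (h1 : (r, c) ∈ cells m P Q) (h2 : (r + 1, c') ∈ cells m P Q) (hcc : c ≤ c') :
    (r + 1, c) ∈ cells m P Q := by
  rw [mem_cells' h] at *
  have := h.2.2.2.2.1 r h1.1 (by omega)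
  exact ⟨by omega, h2.2.1, by omega, by omega⟩

lemma cell_above (h : ShapeHyps m n P Q) {r : ℕ} {c c' : ℤ}
    (h1 : (r, c) ∈ cells m P Q) (h2 : (r + 1, c') ∈ cells m P Q) (hcc : c ≤ c') :
    (r, c') ∈ cells m P Q := by
  rw [mem_cells' h] at *
  have := h.2.2.1 r h1.1 (by omega)
  exact ⟨h1.1, h1.2.1, by omega, by omega⟩

lemma row_mono (h : ShapeHyps m n P Q) (hT : IsSSYT m n P Q T) {r : ℕ} {c c' : ℤ}
    (h1 : (r, c) ∈ cells m P Q) (h2 : (r, c') ∈ cells m P Q) (hcc : c ≤ c') :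
    T (r, c) ≤ T (r, c') := by
  obtain ⟨k, hk⟩ : ∃ k : ℕ, c' = c + k := ⟨(c' - c).toNat, by omega⟩
  subst hk
  clear hcc
  induction k with
  | zero => simp
  | succ k ih =>
      have hmid : (r, c + k) ∈ cells m P Q := by
        refine cell_between h h1 h2 (by omega) (by push_cast; omega)
      have hstep : T (r, c + k) ≤ T (r, c + k + 1) := hT.2.1 r (c + k) hmid (by
        have : (c + (k : ℤ)) + 1 = c + ((k : ℕ) + 1 : ℕ) := by push_cast; ring
        rw [this]; exact h2)
      have : (c + (k : ℤ)) + 1 = c + ((k : ℕ) + 1 : ℕ) := by push_cast; ring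
      rw [← this]
      exact le_trans (ih hmid) hstep

/-! ### Rank in a finite set of integers -/

noncomputable def rkIn (s : Finset ℤ) (c : ℤ) : ℕ := (s.filter fun c' => c' < c).card

lemma rkIn_strictMono {s : Finset ℤ} {c c' : ℤ} (hc : c ∈ s) (hcc : c < c') :
    rkIn s c < rkIn s c' := by
  apply Finset.card_lt_card
  constructor
  · intro z hz
    rw [mem_filter] at *
    exact ⟨hz.1, by omega⟩
  · intro hsub
    have := hsub (mem_filter.mpr ⟨hc, hcc⟩)
    rw [mem_filter] at this
    omega

lemma card_rkIn_lt (s : Finset ℤ) (k : ℕ) :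
    (s.filter fun c => rkIn s c < k).card = min k s.card := by
  obtain ⟨N0, hn⟩ : ∃ N0, s.card = N0 := ⟨_, rfl⟩
  induction N0 generalizing s k with
  | zero =>
      rw [Finset.card_eq_zero] at hn
      subst hn; simp
  | succ N ih =>
      have hne : s.Nonempty := by
        rw [← Finset.card_pos, hn]; omega
      set M := s.max' hne with hM
      have hMs : M ∈ s := s.max'_mem hne
      have herase : (s.erase M).card = N := by
        rw [Finset.card_erase_of_mem hMs, hn]; omega
      have hrk_erase : ∀ c ∈ s.erase M, rkIn s c = rkIn (s.erase M) c := by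
        intro c hc
        have hcM : c < M := by
          have := s.le_max' c (Finset.mem_of_mem_erase hc)
          have := Finset.ne_of_mem_erase hc
          omega
        unfold rkIn
        congr 1
        ext z
        simp only [mem_filter, Finset.mem_erase]
        constructor
        · rintro ⟨hz, hzc⟩; exact ⟨⟨by omega, hz⟩, hzc⟩
        · rintro ⟨⟨-, hz⟩, hzc⟩; exact ⟨hz, hzc⟩
      have hrkM : rkIn s M = N := by
        unfold rkIn
        rw [← herase]
        congr 1
        ext z
        simp only [mem_filter, Finset.mem_erase]
        constructor
        · rintro ⟨hz, hzM⟩; exact ⟨by omega, hz⟩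
        · rintro ⟨hzM, hz⟩
          have := s.le_max' z hz
          exact ⟨hz, by omega⟩
      have hins : s = insert M (s.erase M) := (Finset.insert_erase hMs).symm
      have hsplit : (s.filter fun c => rkIn s c < k)
          = if rkIn s M < k then insert M ((s.erase M).filter fun c => rkIn (s.erase M) c < k)
            else ((s.erase M).filter fun c => rkIn (s.erase M) c < k) := by
        conv_lhs => rw [hins, Finset.filter_insert]
        have heq : filter (fun c => rkIn s c < k) (s.erase M)
            = filter (fun c => rkIn (s.erase M) c < k) (s.erase M) :=
          Finset.filter_congr (fun c hc => by rw [hrk_erase c hc])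
        rw [← hins, heq]
      rw [hsplit]
      by_cases hMk : rkIn s M < k
      · rw [if_pos hMk]
        rw [Finset.card_insert_of_notMem (by
          intro hmem
          exact Finset.notMem_erase M s (Finset.filter_subset _ _ hmem))]
        rw [ih _ k herase]
        rw [hrkM] at hMk
        omega
      · rw [if_neg hMk]
        rw [ih _ k herase]
        rw [hrkM] at hMk
        omega

/-! ### The Bender–Knuth involution -/

def IsFree (m : ℕ) (P Q : ℕ → ℤ) (a : ℕ) (T : ℕ × ℤ → ℕ) (x : ℕ × ℤ) : Prop :=
  x ∈ cells m P Q ∧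
    ((T x = a ∧ ¬((x.1 + 1, x.2) ∈ cells m P Q ∧ T (x.1 + 1, x.2) = a + 1)) ∨
     (T x = a + 1 ∧ ¬((x.1 - 1, x.2) ∈ cells m P Q ∧ T (x.1 - 1, x.2) = a)))

noncomputable def freeRow (m : ℕ) (P Q : ℕ → ℤ) (a : ℕ) (T : ℕ × ℤ → ℕ) (r : ℕ) : Finset ℤ :=
  (Finset.Ioc (Q r) (P r)).filter fun c => IsFree m P Q a T (r, c)

noncomputable def qr (m : ℕ) (P Q : ℕ → ℤ) (a : ℕ) (T : ℕ × ℤ → ℕ) (r : ℕ) : ℕ :=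
  ((freeRow m P Q a T r).filter fun c => T (r, c) = a + 1).card

noncomputable def pr (m : ℕ) (P Q : ℕ → ℤ) (a : ℕ) (T : ℕ × ℤ → ℕ) (r : ℕ) : ℕ :=
  ((freeRow m P Q a T r).filter fun c => T (r, c) = a).card

noncomputable def bk (m : ℕ) (P Q : ℕ → ℤ) (a : ℕ) (T : ℕ × ℤ → ℕ) : ℕ × ℤ → ℕ := fun x =>
  if IsFree m P Q a T x then
    (if rkIn (freeRow m P Q a T x.1) x.2 < qr m P Q a T x.1 then a else a + 1)
  else T x

lemma isFree_val {x : ℕ × ℤ} (hf : IsFree m P Q a T x) : T x = a ∨ T x = a + 1 := by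
  rcases hf.2 with h | h <;> [left; right] <;> exact h.1

lemma mem_freeRow (h : ShapeHyps m n P Q) {r : ℕ} {c : ℤ} :
    c ∈ freeRow m P Q a T r ↔ IsFree m P Q a T (r, c) := by
  simp only [freeRow, mem_filter, Finset.mem_Ioc]
  refine ⟨fun hx => hx.2, fun hf => ⟨?_, hf⟩⟩
  have := (mem_cells' h).mp hf.1
  omega

lemma bk_not_free {x : ℕ × ℤ} (hx : ¬ IsFree m P Q a T x) : bk m P Q a T x = T x :=
  if_neg hx

lemma bk_free {x : ℕ × ℤ} (hx : IsFree m P Q a T x) :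
    bk m P Q a T x = if rkIn (freeRow m P Q a T x.1) x.2 < qr m P Q a T x.1 then a else a + 1 :=
  if_pos hx

lemma bk_free_val {x : ℕ × ℤ} (hx : IsFree m P Q a T x) :
    bk m P Q a T x = a ∨ bk m P Q a T x = a + 1 := by
  rw [bk_free hx]
  split
  · exact Or.inl rfl
  · exact Or.inr rfl

lemma bk_eq_self_of_val {x : ℕ × ℤ} (hv : T x ≠ a ∧ T x ≠ a + 1) : bk m P Q a T x = T x := by
  apply bk_not_free
  intro hf
  rcases isFree_val hf with h | h <;> tauto

/-- A free `a`-entry lies strictly to the left of a free `(a+1)`-entry in the same row. -/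
lemma free_a_lt_free_b (h : ShapeHyps m n P Q) (hT : IsSSYT m n P Q T) {r : ℕ} {c c' : ℤ}
    (hc : IsFree m P Q a T (r, c)) (hc' : IsFree m P Q a T (r, c'))
    (hva : T (r, c) = a) (hvb : T (r, c') = a + 1) : c < c' := by
  by_contra hle
  push_neg at hle
  have := row_mono h hT hc'.1 hc.1 hle
  omega

lemma pr_add_qr (h : ShapeHyps m n P Q) (r : ℕ) :
    pr m P Q a T r + qr m P Q a T r = (freeRow m P Q a T r).card := by
  rw [pr, qr]
  have : (freeRow m P Q a T r).filter (fun c => T (r, c) = a + 1)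
      = (freeRow m P Q a T r).filter (fun c => ¬ T (r, c) = a) := by
    apply Finset.filter_congr
    intro c hc
    have := isFree_val ((mem_freeRow h).mp hc)
    constructor
    · intro h1; omega
    · intro h1; omega
  rw [this, Finset.card_filter_add_card_filter_not]

lemma rk_lt_pr_iff (h : ShapeHyps m n P Q) (hT : IsSSYT m n P Q T) {r : ℕ} {c : ℤ}
    (hc : c ∈ freeRow m P Q a T r) :
    rkIn (freeRow m P Q a T r) c < pr m P Q a T r ↔ T (r, c) = a := by
  set s := freeRow m P Q a T r with hs
  have hfree := (mem_freeRow h).mp hc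
  constructor
  · intro hrk
    rcases isFree_val hfree with hv | hv
    · exact hv
    · exfalso
      have hsub : s.filter (fun c' => T (r, c') = a) ⊆ s.filter (fun c' => c' < c) := by
        intro z hz
        rw [mem_filter] at *
        exact ⟨hz.1, free_a_lt_free_b h hT ((mem_freeRow h).mp hz.1) hfree hz.2 hv⟩
      have := Finset.card_le_card hsub
      rw [pr] at hrk
      rw [rkIn] at hrk
      rw [← hs] at hrk
      omega
  · intro hv
    have hsub : s.filter (fun c' => c' < c) ⊆ (s.filter (fun c' => T (r, c') = a)).erase c := by
      intro z hz
      rw [mem_filter] at hz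
      have hzfree := (mem_freeRow h).mp hz.1
      rcases isFree_val hzfree with hz2 | hz2
      · rw [Finset.mem_erase, mem_filter]
        exact ⟨by omega, hz.1, hz2⟩
      · exfalso
        have := free_a_lt_free_b h hT hfree hzfree hv hz2
        omega
    have hle := Finset.card_le_card hsub
    have hcmem : c ∈ s.filter (fun c' => T (r, c') = a) := mem_filter.mpr ⟨hc, hv⟩
    have := Finset.card_erase_of_mem hcmem
    have hpos : 0 < (s.filter (fun c' => T (r, c') = a)).card := Finset.card_pos.mpr ⟨c, hcmem⟩
    rw [rkIn, pr, ← hs]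
    omega

lemma free_below_big (hT : IsSSYT m n P Q T) {r : ℕ} {c : ℤ}
    (hf : IsFree m P Q a T (r, c)) (hb : (r + 1, c) ∈ cells m P Q) :
    a + 1 < T (r + 1, c) := by
  have hcol := hT.2.2.1 r c hf.1 hb
  rcases hf.2 with ⟨hv, hcl⟩ | ⟨hv, hcl⟩
  · simp only at hcl
    have : ¬ T (r + 1, c) = a + 1 := fun hh => hcl ⟨hb, hh⟩
    omega
  · omega

lemma free_above_small (hT : IsSSYT m n P Q T) {r0 : ℕ} {c : ℤ}
    (hf : IsFree m P Q a T (r0 + 1, c)) (hb : (r0, c) ∈ cells m P Q) :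
    T (r0, c) < a := by
  have hcol := hT.2.2.1 r0 c hb hf.1
  rcases hf.2 with ⟨hv, hcl⟩ | ⟨hv, hcl⟩
  · omega
  · simp only [Nat.add_sub_cancel] at hcl
    have : ¬ T (r0, c) = a := fun hh => hcl ⟨hb, hh⟩
    omega

lemma isFree_bk_of_isFree (h : ShapeHyps m n P Q) (hT : IsSSYT m n P Q T) {x : ℕ × ℤ}
    (hf : IsFree m P Q a T x) : IsFree m P Q a (bk m P Q a T) x := by
  obtain ⟨r, c⟩ := x
  refine ⟨hf.1, ?_⟩
  rcases bk_free_val hf with hv | hv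
  · left
    refine ⟨hv, ?_⟩
    rintro ⟨hb, hvb⟩
    simp only at hb hvb
    have hbig := free_below_big hT hf hb
    have : ¬ IsFree m P Q a T (r + 1, c) := by
      intro hff
      rcases isFree_val hff with h1 | h1 <;> omega
    rw [bk_not_free this] at hvb
    omega
  · right
    refine ⟨hv, ?_⟩
    rintro ⟨hb, hvb⟩
    simp only at hb hvb
    obtain ⟨r0, rfl⟩ : ∃ r0, r = r0 + 1 := by
      have := (mem_cells' h).mp hf.1
      exact ⟨r - 1, by omega⟩
    simp only [Nat.add_sub_cancel] at hb hvb
    have hsmall := free_above_small hT hf hb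
    have : ¬ IsFree m P Q a T (r0, c) := by
      intro hff
      rcases isFree_val hff with h1 | h1 <;> omega
    rw [bk_not_free this] at hvb
    omega

lemma not_isFree_bk_of_not_isFree (h : ShapeHyps m n P Q) (hT : IsSSYT m n P Q T) {x : ℕ × ℤ}
    (hnf : ¬ IsFree m P Q a T x) : ¬ IsFree m P Q a (bk m P Q a T) x := by
  obtain ⟨r, c⟩ := x
  intro hff
  have hcell : (r, c) ∈ cells m P Q := hff.1
  have hTx : bk m P Q a T (r, c) = T (r, c) := bk_not_free hnf
  by_cases hva : T (r, c) = a
  · -- locked `a`: the cell below carries a locked `a+1`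
    have hbelow : (r + 1, c) ∈ cells m P Q ∧ T (r + 1, c) = a + 1 := by
      by_contra hcon
      exact hnf ⟨hcell, Or.inl ⟨hva, hcon⟩⟩
    have hnfb : ¬ IsFree m P Q a T (r + 1, c) := by
      intro hfb
      rcases hfb.2 with ⟨h1, h2⟩ | ⟨h1, h2⟩
      · omega
      · simp only [Nat.add_sub_cancel] at h2
        exact h2 ⟨hcell, hva⟩
    have hb' : bk m P Q a T (r + 1, c) = a + 1 := by rw [bk_not_free hnfb]; exact hbelow.2
    rcases hff.2 with ⟨h1, h2⟩ | ⟨h1, h2⟩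
    · exact h2 ⟨hbelow.1, hb'⟩
    · rw [hTx] at h1; omega
  · by_cases hvb : T (r, c) = a + 1
    · -- locked `a+1`: the cell above carries a locked `a`
      have habove : (r - 1, c) ∈ cells m P Q ∧ T (r - 1, c) = a := by
        by_contra hcon
        exact hnf ⟨hcell, Or.inr ⟨hvb, hcon⟩⟩
      obtain ⟨r0, rfl⟩ : ∃ r0, r = r0 + 1 := by
        have := (mem_cells' h).mp hcell
        exact ⟨r - 1, by omega⟩
      simp only [Nat.add_sub_cancel] at habove
      have hnfa : ¬ IsFree m P Q a T (r0, c) := by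
        intro hfa
        rcases hfa.2 with ⟨h1, h2⟩ | ⟨h1, h2⟩
        · exact h2 ⟨hcell, hvb⟩
        · omega
      have ha' : bk m P Q a T (r0, c) = a := by rw [bk_not_free hnfa]; exact habove.2
      rcases hff.2 with ⟨h1, h2⟩ | ⟨h1, h2⟩
      · rw [hTx] at h1; omega
      · simp only [Nat.add_sub_cancel] at h2
        exact h2 ⟨habove.1, ha'⟩
    · rcases isFree_val hff with h1 | h1 <;> rw [hTx] at h1 <;> omega

lemma isFree_bk (h : ShapeHyps m n P Q) (hT : IsSSYT m n P Q T) {x : ℕ × ℤ} :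
    IsFree m P Q a (bk m P Q a T) x ↔ IsFree m P Q a T x := by
  constructor
  · intro hff
    by_contra hnf
    exact not_isFree_bk_of_not_isFree h hT hnf hff
  · exact isFree_bk_of_isFree h hT

lemma freeRow_bk (h : ShapeHyps m n P Q) (hT : IsSSYT m n P Q T) (r : ℕ) :
    freeRow m P Q a (bk m P Q a T) r = freeRow m P Q a T r := by
  ext c
  rw [mem_freeRow h, mem_freeRow h, isFree_bk h hT]

lemma qr_le_card (r : ℕ) : qr m P Q a T r ≤ (freeRow m P Q a T r).card :=
  Finset.card_filter_le _ _

lemma card_bk_eq_a (h : ShapeHyps m n P Q) (hT : IsSSYT m n P Q T) (r : ℕ) :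
    ((freeRow m P Q a T r).filter fun c => bk m P Q a T (r, c) = a).card = qr m P Q a T r := by
  have hcong : (freeRow m P Q a T r).filter (fun c => bk m P Q a T (r, c) = a)
      = (freeRow m P Q a T r).filter
          (fun c => rkIn (freeRow m P Q a T r) c < qr m P Q a T r) := by
    apply Finset.filter_congr
    intro c hc
    rw [bk_free ((mem_freeRow h).mp hc)]
    constructor
    · intro h1
      by_contra h2
      rw [if_neg h2] at h1
      omega
    · intro h1
      rw [if_pos h1]
  rw [hcong, card_rkIn_lt]
  exact Nat.min_eq_left (qr_le_card r)

lemma card_bk_eq_b (h : ShapeHyps m n P Q) (hT : IsSSYT m n P Q T) (r : ℕ) :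
    ((freeRow m P Q a T r).filter fun c => bk m P Q a T (r, c) = a + 1).card
      = pr m P Q a T r := by
  have hcong : (freeRow m P Q a T r).filter (fun c => bk m P Q a T (r, c) = a + 1)
      = (freeRow m P Q a T r).filter (fun c => ¬ bk m P Q a T (r, c) = a) := by
    apply Finset.filter_congr
    intro c hc
    have := bk_free_val ((mem_freeRow h).mp hc)
    constructor
    · intro h1; omega
    · intro h1; omega
  have hsplit := Finset.card_filter_add_card_filter_not
    (s := freeRow m P Q a T r) (p := fun c => bk m P Q a T (r, c) = a)
  have h1 := card_bk_eq_a (a := a) h hT r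
  have h2 := pr_add_qr (a := a) (T := T) h r
  rw [hcong]
  omega

lemma qr_bk (h : ShapeHyps m n P Q) (hT : IsSSYT m n P Q T) (r : ℕ) :
    qr m P Q a (bk m P Q a T) r = pr m P Q a T r := by
  rw [qr, freeRow_bk h hT]
  exact card_bk_eq_b h hT r

lemma bk_bk (h : ShapeHyps m n P Q) (hT : IsSSYT m n P Q T) :
    bk m P Q a (bk m P Q a T) = T := by
  funext x
  by_cases hf : IsFree m P Q a T x
  · obtain ⟨r, c⟩ := x
    have hf' : IsFree m P Q a (bk m P Q a T) (r, c) := isFree_bk_of_isFree h hT hf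
    rw [bk_free hf']
    simp only
    rw [freeRow_bk h hT, qr_bk h hT]
    have hc : c ∈ freeRow m P Q a T r := (mem_freeRow h).mpr hf
    rcases isFree_val hf with hv | hv
    · rw [if_pos ((rk_lt_pr_iff h hT hc).mpr hv), hv]
    · rw [if_neg, hv]
      intro hcon
      have := (rk_lt_pr_iff h hT hc).mp hcon
      omega
  · rw [bk_not_free (not_isFree_bk_of_not_isFree h hT hf), bk_not_free hf]

lemma isSSYT_bk (h : ShapeHyps m n P Q) (hT : IsSSYT m n P Q T) (ha : 1 ≤ a)
    (hb : a + 1 ≤ n) : IsSSYT m n P Q (bk m P Q a T) := by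
  refine ⟨?_, ?_, ?_, ?_⟩
  · intro x hx
    by_cases hf : IsFree m P Q a T x
    · rcases bk_free_val hf with hv | hv <;> rw [hv] <;> omega
    · rw [bk_not_free hf]; exact hT.1 x hx
  · -- rows weakly increase
    intro r c h1 h2
    by_cases f1 : IsFree m P Q a T (r, c) <;> by_cases f2 : IsFree m P Q a T (r, c + 1)
    · -- both free
      have hc : c ∈ freeRow m P Q a T r := (mem_freeRow h).mpr f1
      have hc1 : c + 1 ∈ freeRow m P Q a T r := (mem_freeRow h).mpr f2
      rw [bk_free f1, bk_free f2]
      simp only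
      have hmono := rkIn_strictMono hc (lt_add_one c)
      by_cases hq : rkIn (freeRow m P Q a T r) c < qr m P Q a T r
      · rw [if_pos hq]
        split <;> omega
      · rw [if_neg hq, if_neg (by omega)]
    · -- left free, right not
      rw [bk_not_free f2]
      have hrow := hT.2.1 r c h1 h2
      have hu := isFree_val f1
      have hvge : a + 1 ≤ T (r, c + 1) := by
        rcases Nat.lt_or_ge (T (r, c + 1)) (a + 1) with hlt | hge
        · -- T (r, c+1) = a, a locked `a`; contradiction with f1
          exfalso
          have hva : T (r, c + 1) = a := by omega
          have hbelow : (r + 1, c + 1) ∈ cells m P Q ∧ T (r + 1, c + 1) = a + 1 := by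
            by_contra hcon
            exact f2 ⟨h2, Or.inl ⟨hva, hcon⟩⟩
          have hbc : (r + 1, c) ∈ cells m P Q := cell_below h h1 hbelow.1 (by omega)
          have hle : T (r + 1, c) ≤ T (r + 1, c + 1) := hT.2.1 (r + 1) c hbc hbelow.1
          have hgt : T (r, c) < T (r + 1, c) := hT.2.2.1 r c h1 hbc
          have hTb : T (r + 1, c) = a + 1 := by omega
          rcases f1.2 with ⟨hv1, hcl⟩ | ⟨hv1, hcl⟩
          · exact hcl ⟨hbc, hTb⟩
          · omega
        · exact hge
      rcases bk_free_val f1 with hv | hv <;> omega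
    · -- left not free, right free
      rw [bk_not_free f1]
      have hrow := hT.2.1 r c h1 h2
      have hv := isFree_val f2
      have hule : T (r, c) ≤ a := by
        rcases Nat.lt_or_ge a (T (r, c)) with hgt | hle
        · -- T (r, c) = a + 1, a locked `a+1`; contradiction with f2
          exfalso
          have hvu : T (r, c) = a + 1 := by omega
          have habove : (r - 1, c) ∈ cells m P Q ∧ T (r - 1, c) = a := by
            by_contra hcon
            exact f1 ⟨h1, Or.inr ⟨hvu, hcon⟩⟩
          obtain ⟨r0, rfl⟩ : ∃ r0, r = r0 + 1 := by
            have := (mem_cells' h).mp h1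
            exact ⟨r - 1, by omega⟩
          simp only [Nat.add_sub_cancel] at habove
          have hac : (r0, c + 1) ∈ cells m P Q := cell_above h habove.1 h2 (by omega)
          have hge : T (r0, c) ≤ T (r0, c + 1) := row_mono h hT habove.1 hac (by omega)
          have hlt : T (r0, c + 1) < T (r0 + 1, c + 1) := hT.2.2.1 r0 (c + 1) hac h2
          have hTa : T (r0, c + 1) = a := by omega
          rcases f2.2 with ⟨hv1, hcl⟩ | ⟨hv1, hcl⟩
          · omega
          · simp only [Nat.add_sub_cancel] at hcl
            exact hcl ⟨hac, hTa⟩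
        · exact hle
      rcases bk_free_val f2 with hv2 | hv2 <;> omega
    · rw [bk_not_free f1, bk_not_free f2]
      exact hT.2.1 r c h1 h2
  · -- columns strictly increase
    intro r c h1 h2
    by_cases f1 : IsFree m P Q a T (r, c) <;> by_cases f2 : IsFree m P Q a T (r + 1, c)
    · have hbig := free_below_big hT f1 h2
      rcases isFree_val f2 with hv | hv <;> omega
    · have hbig := free_below_big hT f1 h2
      rw [bk_not_free f2]
      rcases bk_free_val f1 with hv | hv <;> omega
    · have hsmall := free_above_small hT f2 h1
      rw [bk_not_free f1]
      rcases bk_free_val f2 with hv | hv <;> omega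
    · rw [bk_not_free f1, bk_not_free f2]
      exact hT.2.2.1 r c h1 h2
  · intro x hx
    have hnf : ¬ IsFree m P Q a T x := fun hf => hx hf.1
    rw [bk_not_free hnf]
    exact hT.2.2.2 x hx

lemma entryCount_bk_other (j : ℕ) (hj1 : j ≠ a) (hj2 : j ≠ a + 1) :
    entryCount m P Q (bk m P Q a T) j = entryCount m P Q T j := by
  unfold entryCount
  congr 1
  apply Finset.filter_congr
  intro x hx
  by_cases hf : IsFree m P Q a T x
  · rcases bk_free_val hf with hv | hvatat <;> rcases isFree_val hf with hw | hw <;>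
      constructor <;> intro hh <;> omega
  · rw [bk_not_free hf]

lemma fst_mem_Icc {x : ℕ × ℤ} (hx : x ∈ cells m P Q) : x.1 ∈ Finset.Icc 1 m := by
  rw [cells, mem_filter, mem_product] at hx
  exact hx.1.1

lemma card_split (s : Finset (ℕ × ℤ)) (p q : ℕ × ℤ → Prop) [DecidablePred p]
    [DecidablePred q] :
    (s.filter p).card
      = (s.filter fun x => q x ∧ p x).card + (s.filter fun x => ¬ q x ∧ p x).card := by
  rw [← Finset.card_filter_add_card_filter_not (s := s.filter p) (p := q)]
  rw [Finset.filter_filter, Finset.filter_filter]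
  congr 1
  · exact congrArg Finset.card (Finset.filter_congr fun x hx => by tauto)
  · exact congrArg Finset.card (Finset.filter_congr fun x hx => by tauto)

lemma card_free_filter (h : ShapeHyps m n P Q) (p : ℕ × ℤ → Prop) [DecidablePred p] :
    ((cells m P Q).filter fun x => IsFree m P Q a T x ∧ p x).card
      = ∑ r ∈ Finset.Icc 1 m, ((freeRow m P Q a T r).filter fun c => p (r, c)).card := by
  rw [Finset.card_eq_sum_card_fiberwise
    (f := Prod.fst) (t := Finset.Icc 1 m)
    (fun x hx => fst_mem_Icc (Finset.mem_of_mem_filter x hx))]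
  apply Finset.sum_congr rfl
  intro r hr
  apply Finset.card_nbij' (i := Prod.snd) (j := fun c => (r, c))
  · intro x hx
    simp only [Finset.mem_coe, mem_filter] at hx
    obtain ⟨⟨hcell, hfree, hp⟩, hfst⟩ := hx
    obtain ⟨r', c⟩ := x
    simp only at hfst
    subst hfst
    exact mem_filter.mpr ⟨(mem_freeRow h).mpr hfree, hp⟩
  · intro c hc
    rw [Finset.mem_coe, mem_filter] at hc
    have hfree := (mem_freeRow h).mp hc.1
    exact mem_filter.mpr ⟨mem_filter.mpr ⟨hfree.1, hfree, hc.2⟩, rfl⟩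
  · intro x hx
    simp only [Finset.mem_coe, mem_filter] at hx
    obtain ⟨r', c⟩ := x
    simp only at hx
    rw [hx.2]
  · intro c hc
    rfl

lemma card_locked_eq (h : ShapeHyps m n P Q) :
    ((cells m P Q).filter fun x => ¬ IsFree m P Q a T x ∧ T x = a).card
      = ((cells m P Q).filter fun x => ¬ IsFree m P Q a T x ∧ T x = a + 1).card := by
  apply Finset.card_nbij' (i := fun x => (x.1 + 1, x.2)) (j := fun y => (y.1 - 1, y.2))
  · intro x hx
    rw [Finset.mem_coe, mem_filter] at hx
    obtain ⟨hcell, hnf, hv⟩ := hx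
    have hbelow : (x.1 + 1, x.2) ∈ cells m P Q ∧ T (x.1 + 1, x.2) = a + 1 := by
      by_contra hcon
      exact hnf ⟨hcell, Or.inl ⟨hv, hcon⟩⟩
    refine mem_filter.mpr ⟨hbelow.1, ?_, hbelow.2⟩
    intro hff
    rcases hff.2 with ⟨h1, h2⟩ | ⟨h1, h2⟩
    · simp only at h1; omega
    · simp only [Nat.add_sub_cancel] at h2
      exact h2 ⟨hcell, hv⟩
  · intro y hy
    rw [Finset.mem_coe, mem_filter] at hy
    obtain ⟨hcell, hnf, hv⟩ := hy
    have habove : (y.1 - 1, y.2) ∈ cells m P Q ∧ T (y.1 - 1, y.2) = a := by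
      by_contra hcon
      exact hnf ⟨hcell, Or.inr ⟨hv, hcon⟩⟩
    obtain ⟨r0, hr0⟩ : ∃ r0, y.1 = r0 + 1 := by
      have := (mem_cells h).mp hcell
      exact ⟨y.1 - 1, by omega⟩
    refine mem_filter.mpr ⟨habove.1, ?_, habove.2⟩
    intro hff
    rcases hff.2 with ⟨h1, h2⟩ | ⟨h1, h2⟩
    · apply h2
      simp only
      have heq : y.1 - 1 + 1 = y.1 := by omega
      rw [heq]
      exact ⟨hcell, hv⟩
    · simp only at h1; omega
  · intro x hx
    simp only [Nat.add_sub_cancel]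
  · intro y hy
    rw [Finset.mem_coe, mem_filter] at hy
    have hy1 : 1 ≤ y.1 := ((mem_cells h).mp hy.1).1
    have : y.1 - 1 + 1 = y.1 := by omega
    show (y.1 - 1 + 1, y.2) = y
    rw [this]

lemma entryCount_bk_a (h : ShapeHyps m n P Q) (hT : IsSSYT m n P Q T) :
    entryCount m P Q (bk m P Q a T) a = entryCount m P Q T (a + 1) := by
  unfold entryCount
  rw [card_split (cells m P Q) (fun x => bk m P Q a T x = a) (IsFree m P Q a T),
      card_split (cells m P Q) (fun x => T x = a + 1) (IsFree m P Q a T)]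
  congr 1
  · rw [card_free_filter h, card_free_filter h]
    apply Finset.sum_congr rfl
    intro r hr
    rw [card_bk_eq_a h hT r, qr]
  · have hcong : (cells m P Q).filter (fun x => ¬ IsFree m P Q a T x ∧ bk m P Q a T x = a)
        = (cells m P Q).filter (fun x => ¬ IsFree m P Q a T x ∧ T x = a) := by
      apply Finset.filter_congr
      intro x hx
      constructor
      · rintro ⟨hnf, hv⟩; rw [bk_not_free hnf] at hv; exact ⟨hnf, hv⟩
      · rintro ⟨hnf, hv⟩; rw [bk_not_free hnf]; exact ⟨hnf, hv⟩
    rw [hcong]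
    exact card_locked_eq h

lemma entryCount_bk_b (h : ShapeHyps m n P Q) (hT : IsSSYT m n P Q T) :
    entryCount m P Q (bk m P Q a T) (a + 1) = entryCount m P Q T a := by
  unfold entryCount
  rw [card_split (cells m P Q) (fun x => bk m P Q a T x = a + 1) (IsFree m P Q a T),
      card_split (cells m P Q) (fun x => T x = a) (IsFree m P Q a T)]
  congr 1
  · rw [card_free_filter h, card_free_filter h]
    apply Finset.sum_congr rfl
    intro r hr
    rw [card_bk_eq_b h hT r, pr]
  · have hcong : (cells m P Q).filter (fun x => ¬ IsFree m P Q a T x ∧ bk m P Q a T x = a + 1)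
        = (cells m P Q).filter (fun x => ¬ IsFree m P Q a T x ∧ T x = a + 1) := by
      apply Finset.filter_congr
      intro x hx
      constructor
      · rintro ⟨hnf, hv⟩; rw [bk_not_free hnf] at hv; exact ⟨hnf, hv⟩
      · rintro ⟨hnf, hv⟩; rw [bk_not_free hnf]; exact ⟨hnf, hv⟩
    rw [hcong]
    exact (card_locked_eq h).symm

/-! ### Finiteness of the set of semistandard tableaux -/

lemma ssyt_finite (m n : ℕ) (P Q : ℕ → ℤ) :
    {T : ℕ × ℤ → ℕ | IsSSYT m n P Q T}.Finite := by
  rw [← Set.finite_coe_iff]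
  have : Finite ({x // x ∈ cells m P Q} → Fin (n + 1)) := by infer_instance
  apply Finite.of_injective
    (f := fun T : {T : ℕ × ℤ → ℕ | IsSSYT m n P Q T} =>
      fun x : {x // x ∈ cells m P Q} =>
        (⟨(T : ℕ × ℤ → ℕ) x.1, by
          have hT := T.2
          have := hT.1 x.1 x.2
          omega⟩ : Fin (n + 1)))
  intro T1 T2 heq
  apply Subtype.ext
  funext x
  by_cases hx : x ∈ cells m P Q
  · have := congrFun heq ⟨x, hx⟩
    simpa [Fin.mk.injEq] using this
  · rw [T1.2.2.2.2 x hx, T2.2.2.2.2 x hx]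

/-! ### Invariance under an adjacent transposition -/

lemma rename_swap_adjacent (h : ShapeHyps m n P Q) {k : ℕ} (hk : k + 1 < n) :
    MvPolynomial.rename (⇑(Equiv.swap (⟨k, by omega⟩ : Fin n) (⟨k + 1, hk⟩ : Fin n)))
      (skewSchur m n P Q) = skewSchur m n P Q := by
  classical
  set u : Fin n := ⟨k, by omega⟩
  set v : Fin n := ⟨k + 1, hk⟩
  set σ := Equiv.swap u v
  set a := k + 1 with ha
  have hfin := ssyt_finite m n P Q
  unfold skewSchur
  rw [finsum_mem_eq_finite_toFinset_sum _ hfin, map_sum]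
  apply Finset.sum_nbij' (i := bk m P Q a) (j := bk m P Q a)
  · intro T hT
    rw [Set.Finite.mem_toFinset] at *
    exact isSSYT_bk h hT (by omega) (by omega)
  · intro T hT
    rw [Set.Finite.mem_toFinset] at *
    exact isSSYT_bk h hT (by omega) (by omega)
  · intro T hT
    rw [Set.Finite.mem_toFinset] at hT
    exact bk_bk h hT
  · intro T hT
    rw [Set.Finite.mem_toFinset] at hT
    exact bk_bk h hT
  · intro T hT
    rw [Set.Finite.mem_toFinset] at hT
    rw [map_prod]
    have hstep : ∀ i : Fin n,
        MvPolynomial.rename (⇑σ)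
            ((MvPolynomial.X i : MvPolynomial (Fin n) ℤ) ^ entryCount m P Q T ((i : ℕ) + 1))
          = (MvPolynomial.X (σ i) : MvPolynomial (Fin n) ℤ)
              ^ entryCount m P Q T ((i : ℕ) + 1) := by
      intro i
      rw [map_pow, MvPolynomial.rename_X]
    rw [Finset.prod_congr rfl fun i _ => hstep i]
    rw [← Equiv.prod_comp σ
      (fun j => MvPolynomial.X j ^ entryCount m P Q (bk m P Q a T) ((j : ℕ) + 1))]
    apply Finset.prod_congr rfl
    intro i _
    congr 1
    by_cases hiu : i = u
    · subst hiu
      rw [Equiv.swap_apply_left]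
      have : ((v : ℕ) + 1) = a + 1 := rfl
      rw [this]
      rw [entryCount_bk_b h hT]
    · by_cases hiv : i = v
      · subst hiv
        rw [Equiv.swap_apply_right]
        have : ((u : ℕ) + 1) = a := rfl
        rw [this]
        rw [entryCount_bk_a h hT]
      · rw [Equiv.swap_apply_of_ne_of_ne hiu hiv]
        rw [entryCount_bk_other ((i : ℕ) + 1)
          (by intro hcon; apply hiu; apply Fin.ext; show (i : ℕ) = k; omega)
          (by intro hcon; apply hiv; apply Fin.ext; show (i : ℕ) = k + 1; omega)]

end SkewBK

namespace SkewBK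

lemma rename_swap_succ (h : ShapeHyps m n P Q) {x y : Fin n} (hxy : (y : ℕ) = (x : ℕ) + 1) :
    MvPolynomial.rename (⇑(Equiv.swap x y)) (skewSchur m n P Q) = skewSchur m n P Q := by
  have hk : (x : ℕ) + 1 < n := by have := y.isLt; omega
  have hswap : Equiv.swap x y
      = Equiv.swap (⟨(x : ℕ), by omega⟩ : Fin n) (⟨(x : ℕ) + 1, hk⟩ : Fin n) := by
    congr 1
    all_goals (apply Fin.ext; simp only [Fin.val_mk]; omega)
  rw [hswap]
  exact rename_swap_adjacent h hk

lemma rename_swap_any (h : ShapeHyps m n P Q) (x y : Fin n) (hxy : x ≠ y) :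
    MvPolynomial.rename (⇑(Equiv.swap x y)) (skewSchur m n P Q) = skewSchur m n P Q := by
  suffices H : ∀ d : ℕ, ∀ x y : Fin n, (y : ℕ) = (x : ℕ) + d + 1 →
      MvPolynomial.rename (⇑(Equiv.swap x y)) (skewSchur m n P Q) = skewSchur m n P Q by
    have hne : (x : ℕ) ≠ (y : ℕ) := fun hc => hxy (Fin.ext hc)
    rcases Nat.lt_or_ge (x : ℕ) (y : ℕ) with hlt | hge
    · exact H ((y : ℕ) - (x : ℕ) - 1) x y (by omega)
    · rw [Equiv.swap_comm]
      exact H ((x : ℕ) - (y : ℕ) - 1) y x (by omega)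
  intro d
  induction d with
  | zero =>
      intro x y hxy
      exact rename_swap_succ h (by omega)
  | succ d ih =>
      intro x y hxy
      have hzlt : (x : ℕ) + d + 1 < n := by have := y.isLt; omega
      set z : Fin n := ⟨(x : ℕ) + d + 1, hzlt⟩ with hz
      have hxz : x ≠ z := by
        intro hc
        have : (x : ℕ) = (x : ℕ) + d + 1 := congrArg Fin.val hc
        omega
      have hxy' : x ≠ y := by
        intro hc
        have : (x : ℕ) = (y : ℕ) := congrArg Fin.val hc
        omega
      have hswap : Equiv.swap x y
          = Equiv.swap z y * Equiv.swap x z * Equiv.swap z y := by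
        rw [Equiv.swap_mul_swap_mul_swap hxz hxy']
        rw [Equiv.swap_comm]
      rw [hswap]
      have hcomp : ∀ (σ τ : Equiv.Perm (Fin n)) (p : MvPolynomial (Fin n) ℤ),
          MvPolynomial.rename (⇑(σ * τ)) p
            = MvPolynomial.rename (⇑σ) (MvPolynomial.rename (⇑τ) p) := by
        intro σ τ p
        rw [MvPolynomial.rename_rename]
        rfl
      rw [hcomp, hcomp]
      have hzy : MvPolynomial.rename (⇑(Equiv.swap z y)) (skewSchur m n P Q)
          = skewSchur m n P Q := rename_swap_succ h (by simp only [hz]; omega)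
      have hxz' : MvPolynomial.rename (⇑(Equiv.swap x z)) (skewSchur m n P Q)
          = skewSchur m n P Q := ih x z (by simp only [hz])
      rw [hzy, hxz', hzy]

end SkewBK


/-- The skew Schur polynomial `s_{P/Q}(x_1,…,x_n)` is a
symmetric polynomial: it is invariant under every permutation of its
variables. -/
theorem skewSchur_symmetric
    (m n : ℕ) (P Q : ℕ → ℤ) (h : ShapeHyps m n P Q) (σ : Equiv.Perm (Fin n)) :
    MvPolynomial.rename σ (skewSchur m n P Q) = skewSchur m n P Q := by
  refine Equiv.Perm.swap_induction_on σ ?_ ?_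
  · rw [Equiv.Perm.coe_one, MvPolynomial.rename_id, AlgHom.id_apply]
  · intro τ x y hxy ih
    rw [Equiv.Perm.coe_mul, ← MvPolynomial.rename_rename, ih,
      SkewBK.rename_swap_any h x y hxy]
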